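/- Let n ≥ 2. The matrix Δ₀ = (G Gᵀ) ⊗ (H Hᵀ) + (H Hᵀ) ⊗ (G Gᵀ) is symmetric positive definite; its eigenvalues are exactly the numbers λ_i μ_j + μ_i λ_j, 1 ≤ i,j ≤ n-1, where λ_k = 4 sin²(kπ/(2n)) and μ_k = 4 cos²(kπ/(2n)), and all of these numbers are strictly positive. -/

import Mathlib

open Matrix Real
open scoped Kronecker

def Emat (n : ℕ) : Matrix (Fin (n - 1)) (Fin n) ℝ :=
  Matrix.of fun i j => if (j : ℕ) = (i : ℕ) + 1 then 1 else 0

def Zmat (n : ℕ) : Matrix (Fin (n - 1)) (Fin n) ℝ :=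
  Matrix.of fun i j => if (j : ℕ) = (i : ℕ) then 1 else 0

def Gmat (n : ℕ) : Matrix (Fin (n - 1)) (Fin n) ℝ := Emat n - Zmat n

def Hmat (n : ℕ) : Matrix (Fin (n - 1)) (Fin n) ℝ := Emat n + Zmat n

/-- `λ_k = 4 sin²(kπ/(2n))` (1-based `k`). -/
noncomputable def lamGG (n : ℕ) (k : Fin (n - 1)) : ℝ :=
  4 * Real.sin (((k : ℕ) + 1) * Real.pi / (2 * n)) ^ 2

/-- `μ_k = 4 cos²(kπ/(2n))` (1-based `k`). -/
noncomputable def muHH (n : ℕ) (k : Fin (n - 1)) : ℝ :=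
  4 * Real.cos (((k : ℕ) + 1) * Real.pi / (2 * n)) ^ 2

/-- tridiagonal 0-diagonal matrix with 1's off diagonal -/
def Cmat (n : ℕ) : Matrix (Fin (n - 1)) (Fin (n - 1)) ℝ :=
  Matrix.of fun i j =>
    (if (j : ℕ) = (i : ℕ) + 1 then 1 else 0) + (if (j : ℕ) + 1 = (i : ℕ) then 1 else 0)

noncomputable def theta (n : ℕ) (k : Fin (n - 1)) : ℝ := ((k : ℕ) + 1) * Real.pi / n

noncomputable def Umat (n : ℕ) : Matrix (Fin (n - 1)) (Fin (n - 1)) ℝ :=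
  Matrix.of fun j k => Real.sin (((j : ℕ) + 1) * theta n k)

lemma sum_delta_mul {m : ℕ} (a : ℕ) (f : Fin m → ℝ) :
    (∑ l : Fin m, (if (l : ℕ) = a then (1 : ℝ) else 0) * f l) =
      if h : a < m then f ⟨a, h⟩ else 0 := by
  split
  · next h =>
    rw [Fintype.sum_eq_single (⟨a, h⟩ : Fin m)]
    · simp
    · intro l hl
      rw [if_neg, zero_mul]
      simpa [Fin.ext_iff] using hl
  · next h =>
    refine Finset.sum_eq_zero fun l _ => ?_
    rw [if_neg, zero_mul]
    have := l.isLt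
    omega

lemma sum_delta_mul' {m : ℕ} (a : ℕ) (f : Fin m → ℝ) :
    (∑ l : Fin m, (if (l : ℕ) + 1 = a then (1 : ℝ) else 0) * f l) =
      if h : a - 1 < m ∧ 1 ≤ a then f ⟨a - 1, h.1⟩ else 0 := by
  split
  · next h =>
    rw [Fintype.sum_eq_single (⟨a - 1, h.1⟩ : Fin m)]
    · rw [if_pos, one_mul]
      show a - 1 + 1 = a
      omega
    · intro l hl
      refine (if_neg fun hc => hl (Fin.ext ?_)).symm ▸ (zero_mul _)
      show (l : ℕ) = a - 1
      omega
  · next h =>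
    refine Finset.sum_eq_zero fun l _ => ?_
    rw [if_neg, zero_mul]
    have := l.isLt
    omega

lemma GGt (n : ℕ) (hn : 2 ≤ n) : Gmat n * (Gmat n)ᵀ = (2 : ℝ) • 1 - Cmat n := by
  ext i j
  have hi := i.isLt
  have hj := j.isLt
  simp only [Gmat, Emat, Zmat, Cmat, Matrix.mul_apply, Matrix.sub_apply, Matrix.transpose_apply,
    Matrix.of_apply, Matrix.smul_apply, Matrix.one_apply, smul_eq_mul]
  simp only [sub_mul, mul_sub, Finset.sum_sub_distrib, sum_delta_mul, Fin.val_mk, Fin.ext_iff]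
  split_ifs <;> norm_num <;> omega

lemma HHt (n : ℕ) (hn : 2 ≤ n) : Hmat n * (Hmat n)ᵀ = (2 : ℝ) • 1 + Cmat n := by
  ext i j
  have hi := i.isLt
  have hj := j.isLt
  simp only [Hmat, Emat, Zmat, Cmat, Matrix.mul_apply, Matrix.add_apply, Matrix.transpose_apply,
    Matrix.of_apply, Matrix.smul_apply, Matrix.one_apply, smul_eq_mul]
  simp only [add_mul, mul_add, Finset.sum_add_distrib, sum_delta_mul, Fin.val_mk, Fin.ext_iff]
  split_ifs <;> norm_num <;> omega

lemma sin_theta_pos (n : ℕ) (hn : 2 ≤ n) (k : Fin (n - 1)) : 0 < Real.sin (theta n k) := by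
  have hk := k.isLt
  apply Real.sin_pos_of_pos_of_lt_pi
  · apply div_pos (by positivity) (by positivity)
  · rw [theta, div_lt_iff₀ (by positivity)]
    have : ((k : ℕ) + 1 : ℝ) < n := by
      have : (k : ℕ) + 1 < n := by omega
      exact_mod_cast this
    nlinarith [Real.pi_pos]

lemma CU (n : ℕ) (hn : 2 ≤ n) :
    Cmat n * Umat n = Umat n * Matrix.diagonal (fun k => 2 * Real.cos (theta n k)) := by
  ext j k
  have hj := j.isLt
  have hk := k.isLt
  rw [Matrix.mul_diagonal]
  simp only [Cmat, Umat, Matrix.mul_apply, Matrix.of_apply]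
  simp only [add_mul, Finset.sum_add_distrib, sum_delta_mul, sum_delta_mul']
  have key : ∀ m : ℕ, m ≤ n →
      Real.sin ((m : ℝ) * theta n k) + Real.sin (((m : ℝ) + 2) * theta n k) =
        Real.sin ((m : ℝ) * theta n k + 1 * theta n k) * (2 * Real.cos (theta n k)) := by
    intro m _
    have h1 : (m : ℝ) * theta n k = ((m : ℝ) * theta n k + 1 * theta n k) - theta n k := by ring
    have h2 : ((m : ℝ) + 2) * theta n k = ((m : ℝ) * theta n k + 1 * theta n k) + theta n k := by ring
    rw [h2, Real.sin_add]
    nth_rewrite 1 [h1]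
    rw [Real.sin_sub]
    ring
  have hsum : (if h : (j : ℕ) + 1 < n - 1
        then Real.sin (((((j : ℕ) + 1 : ℕ)) : ℝ) * theta n k + 1 * theta n k) else 0)
      = Real.sin (((j : ℕ) + 2 : ℝ) * theta n k) := by
    split
    · push_cast
      ring_nf
    · next h =>
      have hjn : (j : ℕ) + 2 = n := by omega
      have h2 : ((j : ℕ) + 2 : ℝ) * theta n k = ((k : ℕ) + 1) * Real.pi := by
        rw [theta]
        have : ((j : ℕ) + 2 : ℝ) = (n : ℝ) := by exact_mod_cast congrArg Nat.cast hjn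
        rw [this]
        field_simp
      rw [h2]
      have := Real.sin_nat_mul_pi ((k : ℕ) + 1)
      push_cast at this ⊢
      rw [this]
  have hsum2 : (if h : (j : ℕ) - 1 < n - 1 ∧ 1 ≤ (j : ℕ)
        then Real.sin (((((j : ℕ) - 1 : ℕ)) : ℝ) * theta n k + 1 * theta n k) else 0)
      = Real.sin (((j : ℕ) : ℝ) * theta n k) := by
    split
    · next h =>
      rw [Nat.cast_sub h.2]
      push_cast
      ring_nf
    · next h =>
      have h0 : (j : ℕ) = 0 := by omega
      rw [h0]
      norm_num
  rw [hsum, hsum2]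
  linarith [key (j : ℕ) (by omega)]

lemma lam_eq (n : ℕ) (hn : 2 ≤ n) (k : Fin (n - 1)) :
    lamGG n k = 2 - 2 * Real.cos (theta n k) := by
  have hn0 : (n : ℝ) ≠ 0 := by positivity
  have hhalf : theta n k = 2 * (((k : ℕ) + 1) * Real.pi / (2 * n)) := by
    rw [theta]; field_simp
  set x := ((k : ℕ) + 1) * Real.pi / (2 * n) with hx
  rw [lamGG, hhalf, Real.cos_two_mul]
  have := Real.sin_sq_add_cos_sq x
  nlinarith [this]

lemma mu_eq (n : ℕ) (hn : 2 ≤ n) (k : Fin (n - 1)) :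
    muHH n k = 2 + 2 * Real.cos (theta n k) := by
  have hn0 : (n : ℝ) ≠ 0 := by positivity
  have hhalf : theta n k = 2 * (((k : ℕ) + 1) * Real.pi / (2 * n)) := by
    rw [theta]; field_simp
  set x := ((k : ℕ) + 1) * Real.pi / (2 * n) with hx
  rw [muHH, hhalf, Real.cos_two_mul]
  ring

lemma lam_pos (n : ℕ) (hn : 2 ≤ n) (k : Fin (n - 1)) : 0 < lamGG n k := by
  have hk := k.isLt
  have hpos : 0 < Real.sin (((k : ℕ) + 1) * Real.pi / (2 * n)) := by
    apply Real.sin_pos_of_pos_of_lt_pi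
    · positivity
    · rw [div_lt_iff₀ (by positivity)]
      have : ((k : ℕ) + 1 : ℝ) < 2 * n := by exact_mod_cast (by omega : (k : ℕ) + 1 < 2 * n)
      nlinarith [Real.pi_pos]
  rw [lamGG]
  positivity

lemma mu_pos (n : ℕ) (hn : 2 ≤ n) (k : Fin (n - 1)) : 0 < muHH n k := by
  have hk := k.isLt
  have hpos : 0 < Real.cos (((k : ℕ) + 1) * Real.pi / (2 * n)) := by
    apply Real.cos_pos_of_mem_Ioo
    constructor
    · have : (0 : ℝ) < ((k : ℕ) + 1) * Real.pi / (2 * n) := by positivity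
      nlinarith [Real.pi_pos]
    · rw [div_lt_iff₀ (by positivity)]
      have : ((k : ℕ) + 1 : ℝ) < n := by exact_mod_cast (by omega : (k : ℕ) + 1 < n)
      nlinarith [Real.pi_pos]
  rw [muHH]
  positivity

lemma AU (n : ℕ) (hn : 2 ≤ n) :
    (Gmat n * (Gmat n)ᵀ) * Umat n = Umat n * Matrix.diagonal (lamGG n) := by
  have hdiag : Matrix.diagonal (lamGG n) =
      (2 : ℝ) • (1 : Matrix (Fin (n - 1)) (Fin (n - 1)) ℝ) -
        Matrix.diagonal (fun k => 2 * Real.cos (theta n k)) := by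
    rw [Matrix.smul_one_eq_diagonal, Matrix.diagonal_sub]
    exact congrArg Matrix.diagonal (funext fun k => lam_eq n hn k)
  rw [GGt n hn, hdiag, Matrix.sub_mul, Matrix.mul_sub, CU n hn]
  congr 1
  rw [Matrix.smul_mul, Matrix.mul_smul, Matrix.one_mul, Matrix.mul_one]

lemma BU (n : ℕ) (hn : 2 ≤ n) :
    (Hmat n * (Hmat n)ᵀ) * Umat n = Umat n * Matrix.diagonal (muHH n) := by
  have hdiag : Matrix.diagonal (muHH n) =
      (2 : ℝ) • (1 : Matrix (Fin (n - 1)) (Fin (n - 1)) ℝ) +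
        Matrix.diagonal (fun k => 2 * Real.cos (theta n k)) := by
    rw [Matrix.smul_one_eq_diagonal, Matrix.diagonal_add]
    exact congrArg Matrix.diagonal (funext fun k => mu_eq n hn k)
  rw [HHt n hn, hdiag, Matrix.add_mul, Matrix.mul_add, CU n hn]
  congr 1
  rw [Matrix.smul_mul, Matrix.mul_smul, Matrix.one_mul, Matrix.mul_one]

lemma U_isUnit (n : ℕ) (hn : 2 ≤ n) : IsUnit (Umat n) := by
  rw [← Matrix.linearIndependent_cols_iff_isUnit]
  apply Module.End.eigenvectors_linearIndependent' (Matrix.mulVecLin (Cmat n))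
    (fun k => 2 * Real.cos (theta n k))
  · -- injectivity
    intro k₁ k₂ h
    have hpi := Real.pi_pos
    have hmem : ∀ k : Fin (n - 1), theta n k ∈ Set.Icc 0 Real.pi := by
      intro k
      have hk := k.isLt
      constructor
      · rw [theta]; positivity
      · rw [theta, div_le_iff₀ (by positivity)]
        have : ((k : ℕ) + 1 : ℝ) ≤ n := by exact_mod_cast (by omega : (k : ℕ) + 1 ≤ n)
        nlinarith
    have h' : 2 * Real.cos (theta n k₁) = 2 * Real.cos (theta n k₂) := h
    have hcos : Real.cos (theta n k₁) = Real.cos (theta n k₂) := by linarith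
    have := Real.injOn_cos (hmem k₁) (hmem k₂) hcos
    rw [theta, theta] at this
    have hn0 : (n : ℝ) ≠ 0 := by positivity
    field_simp at this
    exact Fin.ext (by exact_mod_cast (by linarith : ((k₁ : ℕ) : ℝ) = ((k₂ : ℕ) : ℝ)))
  · -- eigenvectors
    intro k
    rw [Module.End.hasEigenvector_iff, Module.End.mem_eigenspace_iff]
    constructor
    · funext j
      have h := congrFun (congrFun (CU n hn) j) k
      rw [Matrix.mul_apply, Matrix.mul_diagonal] at h
      simpa [Matrix.mulVecLin_apply, Matrix.mulVec, Matrix.transpose_apply, dotProduct,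
        mul_comm] using h
    · intro hzero
      have := congrFun hzero ⟨0, by omega⟩
      simp only [Umat, Matrix.col_apply, Matrix.transpose_apply, Matrix.of_apply, Pi.zero_apply] at this
      have hs := sin_theta_pos n hn k
      rw [show ((((⟨0, by omega⟩ : Fin (n - 1)) : ℕ) + 1 : ℝ)) = 1 by norm_num,
        one_mul] at this
      linarith

/-- `Δ₀ = (G Gᵀ) ⊗ (H Hᵀ) + (H Hᵀ) ⊗ (G Gᵀ)` is symmetric positive definite;
its eigenvalues (its real spectrum) are exactly the numbers `λ_i μ_j + μ_i λ_j`, and all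
these numbers are strictly positive. -/
theorem stmt8 (n : ℕ) (hn : 2 ≤ n) :
    ((Gmat n * (Gmat n)ᵀ) ⊗ₖ (Hmat n * (Hmat n)ᵀ) +
        (Hmat n * (Hmat n)ᵀ) ⊗ₖ (Gmat n * (Gmat n)ᵀ)).PosDef ∧
    spectrum ℝ
        ((Gmat n * (Gmat n)ᵀ) ⊗ₖ (Hmat n * (Hmat n)ᵀ) +
          (Hmat n * (Hmat n)ᵀ) ⊗ₖ (Gmat n * (Gmat n)ᵀ)) =
      {x : ℝ | ∃ i j : Fin (n - 1), x = lamGG n i * muHH n j + muHH n i * lamGG n j} ∧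
    ∀ i j : Fin (n - 1), 0 < lamGG n i * muHH n j + muHH n i * lamGG n j := by
  set A := Gmat n * (Gmat n)ᵀ with hA
  set B := Hmat n * (Hmat n)ᵀ with hB
  set Δ := A ⊗ₖ B + B ⊗ₖ A with hΔ
  set dd : Fin (n - 1) × Fin (n - 1) → ℝ :=
    fun p => lamGG n p.1 * muHH n p.2 + muHH n p.1 * lamGG n p.2 with hdd
  have hpos : ∀ i j : Fin (n - 1), 0 < lamGG n i * muHH n j + muHH n i * lamGG n j := by
    intro i j
    have := lam_pos n hn i
    have := lam_pos n hn j
    have := mu_pos n hn i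
    have := mu_pos n hn j
    positivity
  -- the invertible change of basis
  have hU : IsUnit (Umat n) := U_isUnit n hn
  have hUdet : IsUnit (Umat n).det := (Matrix.isUnit_iff_isUnit_det _).mp hU
  have hUU : (Umat n) * (Umat n)⁻¹ = 1 := Matrix.mul_nonsing_inv _ hUdet
  have hUU' : (Umat n)⁻¹ * (Umat n) = 1 := Matrix.nonsing_inv_mul _ hUdet
  set W : (Matrix (Fin (n - 1) × Fin (n - 1)) (Fin (n - 1) × Fin (n - 1)) ℝ)ˣ :=
    { val := Umat n ⊗ₖ Umat n
      inv := (Umat n)⁻¹ ⊗ₖ (Umat n)⁻¹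
      val_inv := by rw [← Matrix.mul_kronecker_mul, hUU, Matrix.one_kronecker_one]
      inv_val := by rw [← Matrix.mul_kronecker_mul, hUU', Matrix.one_kronecker_one] } with hW
  have hkey : Δ * (W : Matrix _ _ ℝ) = (W : Matrix _ _ ℝ) * Matrix.diagonal dd := by
    show Δ * (Umat n ⊗ₖ Umat n) = (Umat n ⊗ₖ Umat n) * Matrix.diagonal dd
    rw [hΔ, Matrix.add_mul, ← Matrix.mul_kronecker_mul, ← Matrix.mul_kronecker_mul,
      AU n hn, BU n hn, Matrix.mul_kronecker_mul, Matrix.mul_kronecker_mul,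
      Matrix.diagonal_kronecker_diagonal, Matrix.diagonal_kronecker_diagonal,
      ← Matrix.mul_add, Matrix.diagonal_add]
  have hconj : Δ = (W : Matrix _ _ ℝ) * Matrix.diagonal dd * ((W⁻¹ : _ˣ) : Matrix _ _ ℝ) := by
    calc Δ = Δ * ((W : Matrix _ _ ℝ) * ((W⁻¹ : _ˣ) : Matrix _ _ ℝ)) := by
            rw [Units.mul_inv, Matrix.mul_one]
      _ = (Δ * (W : Matrix _ _ ℝ)) * ((W⁻¹ : _ˣ) : Matrix _ _ ℝ) := by rw [Matrix.mul_assoc]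
      _ = (W : Matrix _ _ ℝ) * Matrix.diagonal dd * ((W⁻¹ : _ˣ) : Matrix _ _ ℝ) := by rw [hkey]
  have hspec : spectrum ℝ Δ = {x : ℝ | ∃ i j : Fin (n - 1),
      x = lamGG n i * muHH n j + muHH n i * lamGG n j} := by
    rw [hconj, spectrum.units_conjugate, spectrum_diagonal]
    ext x
    constructor
    · rintro ⟨⟨i, j⟩, rfl⟩
      exact ⟨i, j, rfl⟩
    · rintro ⟨i, j, rfl⟩
      exact ⟨(i, j), rfl⟩
  -- positive semidefiniteness
  have hABsemi : (A ⊗ₖ B).PosSemidef := by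
    have h := Matrix.posSemidef_self_mul_conjTranspose (Gmat n ⊗ₖ Hmat n)
    rwa [Matrix.conjTranspose_eq_transpose_of_trivial, ← Matrix.kroneckerMap_transpose,
      ← Matrix.mul_kronecker_mul] at h
  have hBAsemi : (B ⊗ₖ A).PosSemidef := by
    have h := Matrix.posSemidef_self_mul_conjTranspose (Hmat n ⊗ₖ Gmat n)
    rwa [Matrix.conjTranspose_eq_transpose_of_trivial, ← Matrix.kroneckerMap_transpose,
      ← Matrix.mul_kronecker_mul] at h
  have hsemi : Δ.PosSemidef := hABsemi.add hBAsemi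
  -- invertibility of Δ
  have hDunit : IsUnit (Matrix.diagonal dd) := by
    apply (Matrix.isUnit_iff_isUnit_det _).mpr
    rw [Matrix.det_diagonal]
    exact (Finset.prod_pos fun p _ => hpos p.1 p.2).ne'.isUnit
  have hΔunit : IsUnit Δ := by
    rw [hconj]
    exact (W.isUnit.mul hDunit).mul (W⁻¹).isUnit
  have hΔinj : Function.Injective Δ.mulVec := Matrix.mulVec_injective_iff_isUnit.mpr hΔunit
  have hposdef : Δ.PosDef := by
    refine Matrix.PosDef.of_dotProduct_mulVec_pos hsemi.1 fun x hx => ?_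
    rcases lt_or_eq_of_le (hsemi.dotProduct_mulVec_nonneg x) with h | h
    · exact h
    · exfalso
      have h0 : Δ *ᵥ x = 0 := (hsemi.dotProduct_mulVec_zero_iff x).mp h.symm
      have : Δ *ᵥ x = Δ *ᵥ 0 := by rw [h0, Matrix.mulVec_zero]
      exact hx (hΔinj this)
  exact ⟨hposdef, hspec, hpos⟩
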